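/- arXiv:1706.00666 — 2 statements merged into one kernel-verified Lean document; each statement's English description precedes it below -/
import Mathlib

section
/- Let Z be a standard normal random variable and let Y_k ~ Beta(1/2, (k-1)/2). Then P(Y_k > 1/k) → P(Z² > 1) as k → ∞. -/
open MeasureTheory ProbabilityTheory Filter

/-- The Beta measure with parameters `a`, `b` on `ℝ`, given by its density
`x ^ (a-1) * (1-x) ^ (b-1) / B(a,b)` on `(0,1)`, where `B(a,b) = Γ(a)Γ(b)/Γ(a+b)`. -/
noncomputable def betaMeasure (a b : ℝ) : Measure ℝ :=
  (volume.restrict (Set.Ioo (0 : ℝ) 1)).withDensity fun x =>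
    ENNReal.ofReal ((Real.Gamma (a + b) / (Real.Gamma a * Real.Gamma b)) *
      x ^ (a - 1) * (1 - x) ^ (b - 1))

open Real Topology Set

section Aux

noncomputable def rr (k : ℕ) : ℝ := Real.Gamma (k/2) / Real.Gamma ((k-1)/2)

lemma rr_pos {k : ℕ} (hk : 2 ≤ k) : 0 < rr k := by
  have hk2 : (2:ℝ) ≤ k := by exact_mod_cast hk
  have h1 : (0:ℝ) < (k:ℝ)/2 := by linarith
  have h2 : (0:ℝ) < ((k:ℝ)-1)/2 := by linarith
  exact div_pos (Real.Gamma_pos_of_pos h1) (Real.Gamma_pos_of_pos h2)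

lemma rr_mul {k : ℕ} (hk : 2 ≤ k) : rr (k+1) * rr k = ((k:ℝ)-1)/2 := by
  have hk2 : (2:ℝ) ≤ k := by exact_mod_cast hk
  have h0 : ((k:ℝ)-1)/2 ≠ 0 := by intro h; nlinarith [h]
  have hG : Real.Gamma (((k:ℝ)+1)/2) = (((k:ℝ)-1)/2) * Real.Gamma (((k:ℝ)-1)/2) := by
    have : ((k:ℝ)+1)/2 = ((k:ℝ)-1)/2 + 1 := by ring
    rw [this, Real.Gamma_add_one h0]
  have hGk : Real.Gamma ((k:ℝ)/2) ≠ 0 := (Real.Gamma_pos_of_pos (by linarith)).ne'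
  have hGk1 : Real.Gamma (((k:ℝ)-1)/2) ≠ 0 := (Real.Gamma_pos_of_pos (by linarith)).ne'
  simp only [rr, Nat.cast_add, Nat.cast_one, add_sub_cancel_right]
  rw [hG]
  field_simp

lemma rr_mono {k : ℕ} (hk : 2 ≤ k) : rr k ≤ rr (k+1) := by
  have hk2 : (2:ℝ) ≤ k := by exact_mod_cast hk
  have hx : ((k:ℝ)-1)/2 ∈ Set.Ioi (0:ℝ) := by simp; linarith
  have hy : ((k:ℝ)+1)/2 ∈ Set.Ioi (0:ℝ) := by simp; linarith
  have key := Real.convexOn_log_Gamma.2 hx hy (by norm_num : (0:ℝ) ≤ 1/2)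
    (by norm_num : (0:ℝ) ≤ 1/2) (by norm_num)
  have hmid : (1/2:ℝ) • (((k:ℝ)-1)/2) + (1/2:ℝ) • (((k:ℝ)+1)/2) = (k:ℝ)/2 := by
    simp [smul_eq_mul]; ring
  rw [hmid] at key
  simp only [Function.comp_apply, smul_eq_mul] at key
  have hGx := Real.Gamma_pos_of_pos (Set.mem_Ioi.mp hx)
  have hGy := Real.Gamma_pos_of_pos (Set.mem_Ioi.mp hy)
  have hGm := Real.Gamma_pos_of_pos (show (0:ℝ) < (k:ℝ)/2 by linarith)
  have hsq : (Real.Gamma ((k:ℝ)/2))^2 ≤ Real.Gamma (((k:ℝ)-1)/2) * Real.Gamma (((k:ℝ)+1)/2) := by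
    have h2 : 2 * Real.log (Real.Gamma ((k:ℝ)/2)) ≤
        Real.log (Real.Gamma (((k:ℝ)-1)/2)) + Real.log (Real.Gamma (((k:ℝ)+1)/2)) := by linarith
    have := Real.exp_le_exp.mpr h2
    rw [Real.exp_add, Real.exp_log hGx, Real.exp_log hGy] at this
    calc Real.Gamma ((k:ℝ)/2)^2 = rexp (2 * Real.log (Real.Gamma ((k:ℝ)/2))) := by
          rw [two_mul, Real.exp_add, Real.exp_log hGm, sq]
      _ ≤ _ := this
  simp only [rr, Nat.cast_add, Nat.cast_one, add_sub_cancel_right]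
  rw [div_le_div_iff₀ hGx hGm]
  nlinarith [hsq]

lemma rr_sq_bounds {k : ℕ} (hk : 3 ≤ k) :
    ((k:ℝ)-2)/2 ≤ rr k ^ 2 ∧ rr k ^ 2 ≤ ((k:ℝ)-1)/2 := by
  have hk2 : 2 ≤ k := by omega
  obtain ⟨m, rfl⟩ : ∃ m, k = m + 1 := ⟨k-1, by omega⟩
  have hm : 2 ≤ m := by omega
  have h1 := rr_mul hm
  have h2 := rr_mul hk2
  have hp1 := rr_pos hm
  have hp2 := rr_pos hk2
  have hmono1 := rr_mono hm
  have hmono2 := rr_mono hk2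
  constructor
  · have : ((m:ℝ)-1)/2 ≤ rr (m+1) ^ 2 := by nlinarith
    convert this using 2 <;> push_cast <;> ring
  · nlinarith

lemma rr_lim : Tendsto (fun k : ℕ => rr k / Real.sqrt k) atTop (𝓝 (1/Real.sqrt 2)) := by
  have hsq : Tendsto (fun k : ℕ => rr k ^ 2 / k) atTop (𝓝 (1/2)) := by
    have ha : Tendsto (fun k : ℕ => ((k:ℝ)-2)/(2*k)) atTop (𝓝 (1/2)) := by
      have : (fun k : ℕ => ((k:ℝ)-2)/(2*k)) =ᶠ[atTop] fun k : ℕ => 1/2 - 1/k := by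
        filter_upwards [eventually_gt_atTop 0] with k hk
        have : (k:ℝ) ≠ 0 := Nat.cast_ne_zero.mpr hk.ne'
        field_simp
      rw [tendsto_congr' this]
      have := tendsto_one_div_atTop_nhds_zero_nat (𝕜 := ℝ)
      have h := (tendsto_const_nhds (x := (1/2:ℝ)) (f := atTop (α:= ℕ))).sub this
      simpa using h
    have hb : Tendsto (fun k : ℕ => ((k:ℝ)-1)/(2*k)) atTop (𝓝 (1/2)) := by
      have : (fun k : ℕ => ((k:ℝ)-1)/(2*k)) =ᶠ[atTop] fun k : ℕ => 1/2 - 1/(2*k) := by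
        filter_upwards [eventually_gt_atTop 0] with k hk
        have : (k:ℝ) ≠ 0 := Nat.cast_ne_zero.mpr hk.ne'
        field_simp
      rw [tendsto_congr' this]
      have h2 : Tendsto (fun k : ℕ => 1/(2*(k:ℝ))) atTop (𝓝 0) := by
        have := tendsto_one_div_atTop_nhds_zero_nat (𝕜 := ℝ)
        have h := this.const_mul (1/2 : ℝ)
        simp only [mul_zero] at h
        convert h using 2 with k
        ring
      have h := (tendsto_const_nhds (x := (1/2:ℝ)) (f := atTop (α:= ℕ))).sub h2
      simpa using h
    refine tendsto_of_tendsto_of_tendsto_of_le_of_le' ha hb ?_ ?_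
    · filter_upwards [eventually_ge_atTop 3] with k hk
      have h := (rr_sq_bounds hk).1
      have hkpos : (0:ℝ) < k := by exact_mod_cast Nat.pos_of_ne_zero (by omega)
      rw [div_le_div_iff₀ (by positivity) hkpos]
      nlinarith [mul_le_mul_of_nonneg_right h hkpos.le]
    · filter_upwards [eventually_ge_atTop 3] with k hk
      have h := (rr_sq_bounds hk).2
      have hkpos : (0:ℝ) < k := by exact_mod_cast Nat.pos_of_ne_zero (by omega)
      rw [div_le_div_iff₀ hkpos (by positivity)]
      nlinarith [mul_le_mul_of_nonneg_right h hkpos.le]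
  have hcont : Tendsto (fun k : ℕ => Real.sqrt (rr k ^ 2 / k)) atTop (𝓝 (Real.sqrt (1/2))) :=
    (Real.continuous_sqrt.tendsto _).comp hsq
  have heq : (fun k : ℕ => Real.sqrt (rr k ^ 2 / k)) =ᶠ[atTop] fun k : ℕ => rr k / Real.sqrt k := by
    filter_upwards [eventually_ge_atTop 2] with k hk
    rw [Real.sqrt_div' _ (by positivity), Real.sqrt_sq (rr_pos hk).le]
  rw [tendsto_congr' heq] at hcont
  have hs : Real.sqrt (1/2) = 1/Real.sqrt 2 := by
    rw [one_div, one_div, Real.sqrt_inv]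
  rwa [hs] at hcont

lemma set_eq : {z : ℝ | 1 < z ^ 2} = Iio (-1) ∪ Ioi 1 := by
  ext z
  simp only [mem_setOf_eq, mem_union, mem_Iio, mem_Ioi]
  constructor
  · intro h
    rcases le_or_gt z 0 with hz | hz
    · left; nlinarith
    · right; nlinarith
  · rintro (h | h) <;> nlinarith

lemma sqrt_two_div_pi : Real.sqrt (2/π) = 2 * (Real.sqrt (2*π))⁻¹ := by
  rw [Real.sqrt_div (by norm_num : (0:ℝ) ≤ 2) π, Real.sqrt_mul (by norm_num : (0:ℝ) ≤ 2)]
  have hs2 : Real.sqrt 2 * Real.sqrt 2 = 2 := Real.mul_self_sqrt (by norm_num)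
  have hp : Real.sqrt π ≠ 0 := (Real.sqrt_pos.mpr pi_pos).ne'
  have h2 : Real.sqrt 2 ≠ 0 := by positivity
  field_simp
  linear_combination hs2

lemma gauss_val : (gaussianReal 0 1) {z : ℝ | 1 < z ^ 2} =
    ENNReal.ofReal (∫ u in Ioi (1:ℝ), Real.sqrt (2/π) * Real.exp (-u^2/2)) := by
  rw [gaussianReal_apply_eq_integral 0 one_ne_zero, set_eq]
  congr 1
  have hint : Integrable (gaussianPDFReal 0 1) := integrable_gaussianPDFReal 0 1
  have hdisj : Disjoint (Iio (-1:ℝ)) (Ioi 1) := by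
    simp only [Set.disjoint_left, mem_Iio, mem_Ioi, not_lt]
    intro a h1
    linarith
  rw [setIntegral_union hdisj measurableSet_Ioi hint.integrableOn hint.integrableOn]
  have heven : ∀ x : ℝ, gaussianPDFReal 0 1 (-x) = gaussianPDFReal 0 1 x := by
    intro x; simp [gaussianPDFReal]
  have h1 : ∫ x in Iio (-1:ℝ), gaussianPDFReal 0 1 x = ∫ x in Ioi (1:ℝ), gaussianPDFReal 0 1 x := by
    rw [← integral_Iic_eq_integral_Iio, ← integral_comp_neg_Ioi]
    exact setIntegral_congr_fun measurableSet_Ioi fun x _ => (heven x)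
  rw [h1, ← two_mul, ← integral_const_mul]
  refine setIntegral_congr_fun measurableSet_Ioi fun x _ => ?_
  simp only [gaussianPDFReal, NNReal.coe_one, mul_one, sub_zero]
  rw [sqrt_two_div_pi]
  ring

lemma ptlim (u : ℝ) :
    Tendsto (fun k : ℕ => (1 - u^2/k) ^ (((k:ℝ)-3)/2)) atTop (𝓝 (Real.exp (-u^2/2))) := by
  have hL : Tendsto (fun k : ℕ => Real.log (1 + (-u^2)/k)) atTop (𝓝 0) := by
    have h1 : Tendsto (fun k : ℕ => 1 + (-u^2)/(k:ℝ)) atTop (𝓝 1) := by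
      have := tendsto_const_div_atTop_nhds_zero_nat (-u^2)
      have h := (tendsto_const_nhds (x := (1:ℝ)) (f := atTop (α := ℕ))).add this
      simpa using h
    have hcont : ContinuousAt Real.log 1 := Real.continuousAt_log one_ne_zero
    have := hcont.tendsto.comp h1
    simpa [Function.comp_def] using this
  have hT1 : Tendsto (fun k : ℕ => (k:ℝ) * Real.log (1 + (-u^2)/k)) atTop (𝓝 (-u^2)) :=
    (tendsto_mul_log_one_add_div_atTop (-u^2)).comp tendsto_natCast_atTop_atTop
  have hexp : Tendsto (fun k : ℕ => (((k:ℝ)-3)/2) * Real.log (1 + (-u^2)/k)) atTop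
      (𝓝 (-u^2/2)) := by
    have h := (hT1.const_mul (1/2 : ℝ)).sub (hL.const_mul (3/2 : ℝ))
    simp only [mul_zero, sub_zero] at h
    have heq : ∀ k : ℕ, (1/2 : ℝ) * ((k:ℝ) * Real.log (1 + (-u^2)/k))
        - (3/2 : ℝ) * Real.log (1 + (-u^2)/k)
        = (((k:ℝ)-3)/2) * Real.log (1 + (-u^2)/k) := fun k => by ring
    rw [tendsto_congr heq] at h
    convert h using 2
    ring
  have := (Real.continuous_exp.tendsto _).comp hexp
  refine this.congr' ?_
  filter_upwards [eventually_gt_atTop (Nat.ceil (u^2))] with k hk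
  have hk' : u^2 < (k:ℝ) := lt_of_le_of_lt (Nat.le_ceil _) (by exact_mod_cast hk)
  have hkpos : (0:ℝ) < k := lt_of_le_of_lt (sq_nonneg u) hk'
  have hpos : 0 < 1 + (-u^2)/(k:ℝ) := by
    rw [neg_div]
    have : u^2/(k:ℝ) < 1 := (div_lt_one hkpos).mpr hk'
    linarith
  simp only [Function.comp_apply]
  rw [Real.rpow_def_of_pos (by rw [sub_eq_add_neg, ← neg_div]; exact hpos)]
  rw [mul_comm]
  congr 2
  ring

lemma bound_le {k : ℕ} (hk : 6 ≤ k) {u : ℝ} (hu : u ∈ Ioo (1:ℝ) (Real.sqrt k)) :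
    (1 - u^2/k) ^ (((k:ℝ)-3)/2) ≤ Real.exp (-u^2/4) := by
  have hk6 : (6:ℝ) ≤ k := by exact_mod_cast hk
  have hkpos : (0:ℝ) < k := by linarith
  have hu0 : (0:ℝ) ≤ u := by linarith [hu.1]
  have hu2 : u^2 < k := (Real.lt_sqrt hu0).mp hu.2
  have h0 : (0:ℝ) < 1 - u^2/k := by
    have : u^2/(k:ℝ) < 1 := (div_lt_one hkpos).mpr hu2
    linarith
  have h1 : 1 - u^2/k ≤ Real.exp (-(u^2/k)) := by
    have := Real.add_one_le_exp (-(u^2/k))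
    linarith
  have he : (0:ℝ) ≤ ((k:ℝ)-3)/2 := by linarith
  calc (1 - u^2/k) ^ (((k:ℝ)-3)/2)
      ≤ (Real.exp (-(u^2/k))) ^ (((k:ℝ)-3)/2) := Real.rpow_le_rpow h0.le h1 he
    _ = Real.exp (-(u^2/k) * (((k:ℝ)-3)/2)) := (Real.exp_mul _ _).symm
    _ ≤ Real.exp (-u^2/4) := by
        apply Real.exp_le_exp.mpr
        rw [neg_div, neg_mul, neg_le_neg_iff, div_mul_div_comm,
          div_le_div_iff₀ (by norm_num : (0:ℝ) < 4) (by positivity)]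
        nlinarith [sq_nonneg u, hu.1]

noncomputable def densK (k : ℕ) (x : ℝ) : ℝ :=
  Real.Gamma (1/2 + ((k:ℝ)-1)/2) / (Real.Gamma (1/2) * Real.Gamma (((k:ℝ)-1)/2)) *
    x ^ ((1:ℝ)/2 - 1) * (1 - x) ^ (((k:ℝ)-1)/2 - 1)

noncomputable def dd (k : ℕ) : ℝ := 2 * rr k / (Real.sqrt π * Real.sqrt k)

lemma dd_lim : Tendsto dd atTop (𝓝 (Real.sqrt (2/π))) := by
  have h := rr_lim.const_mul (2/Real.sqrt π)
  have heq : ∀ k : ℕ, (2/Real.sqrt π) * (rr k / Real.sqrt k) = dd k := by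
    intro k
    rw [dd, div_mul_div_comm]
  rw [tendsto_congr heq] at h
  convert h using 1
  rw [sqrt_two_div_pi, Real.sqrt_mul (by norm_num : (0:ℝ) ≤ 2)]
  have hs2 : Real.sqrt 2 * Real.sqrt 2 = 2 := Real.mul_self_sqrt (by norm_num)
  have hp : Real.sqrt π ≠ 0 := (Real.sqrt_pos.mpr pi_pos).ne'
  have h2 : Real.sqrt 2 ≠ 0 := by positivity
  field_simp

lemma densK_contOn {k : ℕ} (hk : 4 ≤ k) :
    ContinuousOn (densK k) (Icc (1/(k:ℝ)) 1) := by
  have hk4 : (4:ℝ) ≤ k := by exact_mod_cast hk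
  have hkpos : (0:ℝ) < k := by linarith
  apply ContinuousOn.mul
  · apply ContinuousOn.mul continuousOn_const
    exact continuousOn_id.rpow_const fun x hx =>
      Or.inl (ne_of_gt (lt_of_lt_of_le (by positivity) hx.1))
  · exact ((continuous_const.sub continuous_id).continuousOn).rpow_const fun x _ =>
      Or.inr (by linarith)

lemma beta_to_int {k : ℕ} (hk : 4 ≤ k) :
    _root_.betaMeasure (1/2) (((k:ℝ)-1)/2) {y : ℝ | 1/(k:ℝ) < y}
      = ENNReal.ofReal (∫ x in (1/(k:ℝ))..1, densK k x) := by
  have hk4 : (4:ℝ) ≤ k := by exact_mod_cast hk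
  have hkpos : (0:ℝ) < k := by linarith
  have hle : 1/(k:ℝ) ≤ 1 := by
    rw [div_le_one hkpos]; linarith
  have hset : {y : ℝ | 1/(k:ℝ) < y} = Ioi (1/(k:ℝ)) := rfl
  rw [_root_.betaMeasure, hset, withDensity_apply _ measurableSet_Ioi,
    Measure.restrict_restrict measurableSet_Ioi]
  have hset2 : Ioi (1/(k:ℝ)) ∩ Ioo 0 1 = Ioo (1/(k:ℝ)) 1 := by
    ext x
    simp only [mem_inter_iff, mem_Ioi, mem_Ioo]
    constructor
    · rintro ⟨h1, _, h3⟩; exact ⟨h1, h3⟩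
    · rintro ⟨h1, h3⟩; exact ⟨h1, lt_trans (by positivity) h1, h3⟩
  rw [hset2]
  have hInt : IntegrableOn (densK k) (Ioo (1/(k:ℝ)) 1) :=
    ((densK_contOn hk).integrableOn_Icc).mono_set Ioo_subset_Icc_self
  have hNonneg : 0 ≤ᵐ[volume.restrict (Ioo (1/(k:ℝ)) 1)] densK k := by
    refine (ae_restrict_iff' measurableSet_Ioo).mpr (ae_of_all _ fun x hx => ?_)
    have hx0 : (0:ℝ) < x := lt_trans (by positivity) hx.1
    have hx1 : x < 1 := hx.2
    have hΓ : 0 < Real.Gamma (1/2 + ((k:ℝ)-1)/2) /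
        (Real.Gamma (1/2) * Real.Gamma (((k:ℝ)-1)/2)) := by
      apply div_pos (Real.Gamma_pos_of_pos (by linarith))
      exact mul_pos (Real.Gamma_pos_of_pos (by norm_num)) (Real.Gamma_pos_of_pos (by linarith))
    exact mul_nonneg (mul_nonneg hΓ.le (Real.rpow_nonneg hx0.le _))
      (Real.rpow_nonneg (by linarith) _)
  rw [intervalIntegral.integral_of_le hle, integral_Ioc_eq_integral_Ioo,
    ofReal_integral_eq_lintegral_ofReal hInt hNonneg]
  rfl

lemma cov {k : ℕ} (hk : 4 ≤ k) :
    ∫ x in (1/(k:ℝ))..1, densK k x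
      = ∫ u in (1:ℝ)..(Real.sqrt k), dd k * (1 - u^2/(k:ℝ)) ^ (((k:ℝ)-3)/2) := by
  have hk4 : (4:ℝ) ≤ k := by exact_mod_cast hk
  have hkpos : (0:ℝ) < k := by linarith
  have hsk : (1:ℝ) ≤ Real.sqrt k := by
    rw [show (1:ℝ) = Real.sqrt 1 by simp]
    exact Real.sqrt_le_sqrt (by linarith)
  have hskpos : (0:ℝ) < Real.sqrt k := by linarith
  have hmulself : Real.sqrt k * Real.sqrt k = k := Real.mul_self_sqrt hkpos.le
  have hcv : ∫ x in (1:ℝ)..(Real.sqrt k), (2*x/(k:ℝ)) • (densK k ∘ fun u => u^2/(k:ℝ)) x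
      = ∫ x in ((1:ℝ)^2/(k:ℝ))..((Real.sqrt k)^2/(k:ℝ)), densK k x := by
    apply intervalIntegral.integral_comp_smul_deriv'
    · intro x _
      have h := (hasDerivAt_pow 2 x).div_const (k:ℝ)
      simpa [mul_comm] using h
    · exact ((continuous_const.mul continuous_id).div_const _).continuousOn
    · refine (densK_contOn hk).mono ?_
      rintro y ⟨u, hu, rfl⟩
      rw [uIcc_of_le hsk] at hu
      have hu1 : (1:ℝ) ≤ u := hu.1
      have hu2 : u ≤ Real.sqrt k := hu.2
      have h1 : (1:ℝ) ≤ u^2 := by nlinarith [sq_nonneg (u-1)]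
      have h2 : u^2 ≤ (k:ℝ) := by nlinarith [mul_self_le_mul_self (by linarith : (0:ℝ) ≤ u) hu2]
      constructor
      · rw [div_le_div_iff₀ hkpos hkpos]
        nlinarith [mul_le_mul_of_nonneg_right h1 hkpos.le]
      · rw [div_le_one hkpos]
        exact h2
  rw [one_pow, Real.sq_sqrt hkpos.le, div_self hkpos.ne'] at hcv
  rw [← hcv]
  apply intervalIntegral.integral_congr
  intro u hu
  rw [uIcc_of_le hsk] at hu
  have hu1 : (1:ℝ) ≤ u := hu.1
  have hu0 : (0:ℝ) < u := by linarith
  simp only [Function.comp_apply, smul_eq_mul, densK]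
  rw [Real.Gamma_one_half_eq]
  rw [show (1/2 + ((k:ℝ)-1)/2) = (k:ℝ)/2 by ring]
  rw [show (((k:ℝ)-1)/2 - 1) = ((k:ℝ)-3)/2 by ring]
  rw [show ((1:ℝ)/2 - 1) = -(1/2) by norm_num]
  rw [Real.rpow_neg (by positivity), ← Real.sqrt_eq_rpow,
    Real.sqrt_div (sq_nonneg u), Real.sqrt_sq hu0.le]
  have hG1 : Real.Gamma (((k:ℝ)-1)/2) ≠ 0 := (Real.Gamma_pos_of_pos (by linarith)).ne'
  have hpne : Real.sqrt π ≠ 0 := (Real.sqrt_pos.mpr pi_pos).ne'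
  rw [dd, rr]
  have hcoef : 2*u/(k:ℝ) * (Real.Gamma ((k:ℝ)/2) / (Real.sqrt π * Real.Gamma (((k:ℝ)-1)/2))
        * (u / Real.sqrt k)⁻¹)
      = 2 * (Real.Gamma ((k:ℝ)/2) / Real.Gamma (((k:ℝ)-1)/2)) / (Real.sqrt π * Real.sqrt k) := by
    field_simp
    linear_combination hmulself
  calc 2*u/(k:ℝ) * (Real.Gamma ((k:ℝ)/2) / (Real.sqrt π * Real.Gamma (((k:ℝ)-1)/2))
          * (u / Real.sqrt k)⁻¹ * (1 - u^2/(k:ℝ)) ^ (((k:ℝ)-3)/2))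
      = (2*u/(k:ℝ) * (Real.Gamma ((k:ℝ)/2) / (Real.sqrt π * Real.Gamma (((k:ℝ)-1)/2))
          * (u / Real.sqrt k)⁻¹)) * (1 - u^2/(k:ℝ)) ^ (((k:ℝ)-3)/2) := by ring
    _ = _ := by rw [hcoef]

noncomputable def FF (k : ℕ) : ℝ → ℝ :=
  Set.indicator (Ioo (1:ℝ) (Real.sqrt k))
    (fun u => dd k * (1 - u^2/(k:ℝ)) ^ (((k:ℝ)-3)/2))

noncomputable def GG : ℝ → ℝ :=
  Set.indicator (Ioi (1:ℝ)) (fun u => Real.sqrt (2/π) * Real.exp (-u^2/2))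

lemma int_FF {k : ℕ} (hk : 4 ≤ k) :
    ∫ u in (1:ℝ)..(Real.sqrt k), dd k * (1 - u^2/(k:ℝ)) ^ (((k:ℝ)-3)/2) = ∫ u, FF k u := by
  have hk4 : (4:ℝ) ≤ k := by exact_mod_cast hk
  have hsk : (1:ℝ) ≤ Real.sqrt k := by
    rw [show (1:ℝ) = Real.sqrt 1 by simp]
    exact Real.sqrt_le_sqrt (by linarith)
  rw [FF, integral_indicator measurableSet_Ioo, intervalIntegral.integral_of_le hsk,
    integral_Ioc_eq_integral_Ioo]

lemma sqrt_two_div_pi_lt_one : Real.sqrt (2/π) < 1 := by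
  rw [show (1:ℝ) = Real.sqrt 1 by simp]
  apply Real.sqrt_lt_sqrt (by positivity)
  rw [div_lt_one pi_pos]
  linarith [pi_gt_three]

lemma dct : Tendsto (fun k : ℕ => ∫ u, FF k u) atTop (𝓝 (∫ u, GG u)) := by
  apply tendsto_integral_filter_of_dominated_convergence
    (bound := fun u : ℝ => Real.exp (-u^2/4))
  · filter_upwards [eventually_ge_atTop 3] with k hk
    have hk3 : (3:ℝ) ≤ k := by exact_mod_cast hk
    have hcont : Continuous (fun u : ℝ => dd k * (1 - u^2/(k:ℝ)) ^ (((k:ℝ)-3)/2)) := by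
      apply continuous_const.mul
      exact (continuous_const.sub ((continuous_pow 2).div_const _)).rpow_const
        fun x => Or.inr (by linarith)
    exact ((hcont.measurable.indicator measurableSet_Ioo).aestronglyMeasurable)
  · filter_upwards [eventually_ge_atTop 6, dd_lim.eventually_lt_const sqrt_two_div_pi_lt_one]
      with k hk hdd
    refine ae_of_all _ fun u => ?_
    by_cases hu : u ∈ Ioo (1:ℝ) (Real.sqrt k)
    · rw [FF, Set.indicator_of_mem hu]
      have hk6 : (6:ℝ) ≤ k := by exact_mod_cast hk
      have hkpos : (0:ℝ) < k := by linarith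
      have hu0 : (0:ℝ) ≤ u := by linarith [hu.1]
      have hu2 : u^2 < k := (Real.lt_sqrt hu0).mp hu.2
      have hbase : (0:ℝ) ≤ 1 - u^2/k := by
        have : u^2/(k:ℝ) < 1 := (div_lt_one hkpos).mpr hu2
        linarith
      have hB0 : (0:ℝ) ≤ (1 - u^2/(k:ℝ)) ^ (((k:ℝ)-3)/2) := Real.rpow_nonneg hbase _
      have hdd0 : (0:ℝ) ≤ dd k := by
        rw [dd]
        have := rr_pos (show 2 ≤ k by omega)
        positivity
      rw [Real.norm_eq_abs, abs_of_nonneg (mul_nonneg hdd0 hB0)]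
      calc dd k * (1 - u^2/(k:ℝ)) ^ (((k:ℝ)-3)/2)
          ≤ 1 * Real.exp (-u^2/4) :=
            mul_le_mul hdd.le (bound_le hk hu) hB0 (by norm_num)
        _ = Real.exp (-u^2/4) := one_mul _
    · rw [FF, Set.indicator_of_notMem hu]
      simp [Real.exp_nonneg]
  · have heq : (fun u : ℝ => Real.exp (-u^2/4)) = fun u : ℝ => Real.exp (-(1/4:ℝ)*u^2) := by
      funext u; congr 1; ring
    rw [heq]
    exact integrable_exp_neg_mul_sq (by norm_num)
  · refine ae_of_all _ fun u => ?_
    rcases le_or_gt u 1 with hu | hu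
    · have hF : ∀ k : ℕ, FF k u = 0 := fun k =>
        Set.indicator_of_notMem (fun h => absurd h.1 (not_lt.mpr hu)) _
      have hG : GG u = 0 := Set.indicator_of_notMem (by simpa using hu) _
      simp only [hF, hG]
      exact tendsto_const_nhds
    · have hG : GG u = Real.sqrt (2/π) * Real.exp (-u^2/2) :=
        Set.indicator_of_mem hu _
      rw [hG]
      have hlim : Tendsto (fun k : ℕ => dd k * (1 - u^2/(k:ℝ)) ^ (((k:ℝ)-3)/2)) atTop
          (𝓝 (Real.sqrt (2/π) * Real.exp (-u^2/2))) := dd_lim.mul (ptlim u)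
      refine hlim.congr' ?_
      filter_upwards [eventually_gt_atTop (Nat.ceil (u^2))] with k hk
      have hk' : u^2 < (k:ℝ) := lt_of_le_of_lt (Nat.le_ceil _) (by exact_mod_cast hk)
      have hu0 : (0:ℝ) ≤ u := by linarith
      have hmem : u ∈ Ioo (1:ℝ) (Real.sqrt k) := ⟨hu, (Real.lt_sqrt hu0).mpr hk'⟩
      rw [FF, Set.indicator_of_mem hmem]

end Aux

theorem stmt7 :
    Tendsto (fun k : ℕ =>
        _root_.betaMeasure (1 / 2) (((k : ℝ) - 1) / 2) {y : ℝ | 1 / (k : ℝ) < y})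
      atTop (nhds ((gaussianReal 0 1) {z : ℝ | 1 < z ^ 2})) := by
  rw [show nhds ((gaussianReal 0 1) {z : ℝ | 1 < z ^ 2})
      = 𝓝 (ENNReal.ofReal (∫ u, GG u)) by rw [gauss_val, GG, integral_indicator measurableSet_Ioi]]
  have h := (ENNReal.continuous_ofReal.tendsto _).comp dct
  refine h.congr' ?_
  filter_upwards [eventually_ge_atTop 4] with k hk
  rw [Function.comp_apply, ← int_FF hk, ← cov hk, ← beta_to_int hk]
end

section
/- Let U be uniform on the unit sphere S^{k-1} and let V = diag(λ₁,…,λ_k) be positive definite with λ₁ ≥ λ₂ ≥ ⋯ ≥ λ_k > 0. Then P(λ₁⁻¹ U₁² ≥ (1/k)·∑_{ℓ=1}^k λ_ℓ⁻¹ U_ℓ²) ≤ P(U₁² ≥ 1/k), with equality if and only if λ₁ = λ₂ = ⋯ = λ_k. -/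
open MeasureTheory

/-- The uniform probability measure on the unit sphere of `ℝ^k`, viewed as a measure on
the ambient Euclidean space: the normalized spherical part of the Lebesgue measure. -/
noncomputable def uniformSphere (k : ℕ) : Measure (EuclideanSpace ℝ (Fin k)) :=
  (((volume : Measure (EuclideanSpace ℝ (Fin k))).toSphere Set.univ)⁻¹ •
    Measure.map Subtype.val (volume : Measure (EuclideanSpace ℝ (Fin k))).toSphere :
    Measure (EuclideanSpace ℝ (Fin k)))

section Aux

open Metric Set Finset
open scoped ENNReal Pointwise

private lemma uniformSphere_apply_aux (k : ℕ) {t : Set (EuclideanSpace ℝ (Fin k))}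
    (ht : MeasurableSet t) :
    uniformSphere k t = ((volume : Measure (EuclideanSpace ℝ (Fin k))).toSphere Set.univ)⁻¹ *
      (volume : Measure (EuclideanSpace ℝ (Fin k))).toSphere (Subtype.val ⁻¹' t) := by
  rw [uniformSphere, Measure.smul_apply, Measure.map_apply measurable_subtype_coe ht, smul_eq_mul]

private lemma uniformSphere_compl_sphere (k : ℕ) :
    uniformSphere k (sphere (0 : EuclideanSpace ℝ (Fin k)) 1)ᶜ = 0 := by
  rw [uniformSphere_apply_aux k isClosed_sphere.measurableSet.compl]
  have h : (Subtype.val ⁻¹' (sphere (0 : EuclideanSpace ℝ (Fin k)) 1)ᶜ :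
      Set (sphere (0 : EuclideanSpace ℝ (Fin k)) 1)) = ∅ := by
    ext x; simp [x.2]
  simp [h]

private lemma smul_inter_sphere_eq (k : ℕ) (G : Set (EuclideanSpace ℝ (Fin k))) :
    Ioo (0:ℝ) 1 • (G ∩ sphere (0 : EuclideanSpace ℝ (Fin k)) 1) =
      {x : EuclideanSpace ℝ (Fin k) | x ≠ 0 ∧ ‖x‖ < 1 ∧ ‖x‖⁻¹ • x ∈ G} := by
  ext x
  rw [Set.mem_smul]
  constructor
  · rintro ⟨r, hr, y, ⟨hyG, hy⟩, rfl⟩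
    rw [mem_sphere_zero_iff_norm] at hy
    obtain ⟨hr0, hr1⟩ := hr
    have hnorm : ‖r • y‖ = r := by rw [norm_smul, hy, Real.norm_eq_abs, abs_of_pos hr0, mul_one]
    refine ⟨?_, by rw [hnorm]; exact hr1, ?_⟩
    · intro h; rw [h, norm_zero] at hnorm; exact hr0.ne' hnorm.symm
    · rw [hnorm, inv_smul_smul₀ hr0.ne']; exact hyG
  · rintro ⟨hx0, hx1, hxG⟩
    have hn : 0 < ‖x‖ := norm_pos_iff.2 hx0
    refine ⟨‖x‖, ⟨hn, hx1⟩, ‖x‖⁻¹ • x, ⟨hxG, ?_⟩, smul_inv_smul₀ hn.ne' x⟩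
    rw [mem_sphere_zero_iff_norm, norm_smul, Real.norm_eq_abs, abs_inv, abs_of_pos hn,
      inv_mul_cancel₀ hn.ne']

private lemma uniformSphere_pos {k : ℕ} (hk : 0 < k) {G : Set (EuclideanSpace ℝ (Fin k))}
    (hG : IsOpen G)
    (hne : (G ∩ sphere (0 : EuclideanSpace ℝ (Fin k)) 1).Nonempty) :
    0 < uniformSphere k (G ∩ sphere (0 : EuclideanSpace ℝ (Fin k)) 1) := by
  have hmeas : MeasurableSet (G ∩ sphere (0 : EuclideanSpace ℝ (Fin k)) 1) :=
    hG.measurableSet.inter isClosed_sphere.measurableSet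
  rw [uniformSphere_apply_aux k hmeas]
  have hpre : (Subtype.val ⁻¹' (G ∩ sphere (0 : EuclideanSpace ℝ (Fin k)) 1) :
      Set (sphere (0 : EuclideanSpace ℝ (Fin k)) 1)) = Subtype.val ⁻¹' G := by
    ext x; simp [x.2]
  have himg : (Subtype.val '' (Subtype.val ⁻¹' G :
      Set (sphere (0 : EuclideanSpace ℝ (Fin k)) 1))) =
      G ∩ sphere (0 : EuclideanSpace ℝ (Fin k)) 1 := by
    rw [Subtype.image_preimage_coe]; exact Set.inter_comm _ _
  -- the cone over `G ∩ sphere` is open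
  set O : Set (EuclideanSpace ℝ (Fin k)) :=
    {x : EuclideanSpace ℝ (Fin k) | x ≠ 0 ∧ ‖x‖ < 1 ∧ ‖x‖⁻¹ • x ∈ G} with hO
  have hOopen : IsOpen O := by
    have hcont : ContinuousOn (fun x : EuclideanSpace ℝ (Fin k) => ‖x‖⁻¹ • x) {x | x ≠ 0} :=
      ((continuousOn_id.norm).inv₀ (fun x hx => norm_ne_zero_iff.2 hx)).smul continuousOn_id
    have h1 : IsOpen {x : EuclideanSpace ℝ (Fin k) | x ≠ 0} := isOpen_compl_singleton
    have h2 := hcont.isOpen_inter_preimage h1 hG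
    have heq : O = ({x : EuclideanSpace ℝ (Fin k) | x ≠ 0} ∩
        (fun x => ‖x‖⁻¹ • x) ⁻¹' G) ∩ ball 0 1 := by
      ext x
      simp only [hO, mem_inter_iff, mem_setOf_eq, Set.mem_preimage, mem_ball_zero_iff]
      tauto
    rw [heq]
    exact h2.inter isOpen_ball
  have hOne : O.Nonempty := by
    obtain ⟨y, hyG, hyS⟩ := hne
    rw [mem_sphere_zero_iff_norm] at hyS
    refine ⟨(1/2 : ℝ) • y, ?_, ?_, ?_⟩
    · simp only [hO, ne_eq]
      intro h
      have := congrArg norm h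
      rw [norm_smul, hyS, norm_zero] at this
      norm_num at this
    · rw [norm_smul, hyS, Real.norm_eq_abs, mul_one, abs_of_pos (by norm_num : (0:ℝ) < 1/2)]
      norm_num
    · have hn : ‖(1/2 : ℝ) • y‖ = 1/2 := by
        rw [norm_smul, hyS, Real.norm_eq_abs, mul_one, abs_of_pos]; norm_num
      rw [hn]
      have : ((1:ℝ)/2)⁻¹ • ((1/2 : ℝ) • y) = y := by
        rw [smul_smul]; norm_num
      rw [this]; exact hyG
  have hvol : 0 < volume O := hOopen.measure_pos volume hOne
  have htS : 0 < (volume : Measure (EuclideanSpace ℝ (Fin k))).toSphere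
      (Subtype.val ⁻¹' (G ∩ sphere (0 : EuclideanSpace ℝ (Fin k)) 1)) := by
    rw [hpre, Measure.toSphere_apply' _ (hG.measurableSet.preimage measurable_subtype_coe),
      himg, smul_inter_sphere_eq k G]
    have hd : Module.finrank ℝ (EuclideanSpace ℝ (Fin k)) = k := finrank_euclideanSpace_fin
    rw [hd]
    exact ENNReal.mul_pos (by exact_mod_cast hk.ne') hvol.ne'
  refine ENNReal.mul_pos ?_ htS.ne'
  rw [ne_eq, ENNReal.inv_eq_zero]
  exact measure_ne_top _ _

private lemma algebra_aux (u a b : ℝ) (hu0 : 0 < u) (hu1 : u < 1) (ha : 0 < a) (hab : a < b) :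
    ∃ t : ℝ, 0 < t ∧ t ≤ (1 - u)/2 ∧
      a * (u + t) < u * (a * (u + t) + b * (1 - u - t)) := by
  have hd : 0 < a * (1 - u) + u * b := by nlinarith
  refine ⟨u * (1 - u) * (b - a) / (2 * (a * (1 - u) + u * b)), ?_, ?_, ?_⟩
  · exact div_pos (mul_pos (mul_pos hu0 (by linarith)) (by linarith)) (by nlinarith)
  · rw [div_le_div_iff₀ (by nlinarith) two_pos]
    nlinarith
  · have htd : (u * (1 - u) * (b - a) / (2 * (a * (1 - u) + u * b))) *
        (2 * (a * (1 - u) + u * b)) = u * (1 - u) * (b - a) := by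
      field_simp
      exact mul_div_cancel_right₀ _ (show (0:ℝ) < (1 - u) * a + u * b by nlinarith).ne'
    set t := u * (1 - u) * (b - a) / (2 * (a * (1 - u) + u * b)) with hts
    have ht0 : 0 < t := by
      rw [hts]; exact div_pos (mul_pos (mul_pos hu0 (by linarith)) (by linarith)) (by nlinarith)
    nlinarith

private lemma exists_point_aux {k : ℕ} (hk : 2 ≤ k) (c₁ c₂ : ℝ) (h1 : 0 ≤ c₁) (h2 : 0 ≤ c₂)
    (hc : c₁ + c₂ = 1) :
    ∃ p : EuclideanSpace ℝ (Fin k), ‖p‖ = 1 ∧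
      p ⟨0, Nat.zero_lt_of_lt hk⟩ ^ 2 = c₁ ∧ p ⟨k-1, by omega⟩ ^ 2 = c₂ ∧
      ∀ ℓ, ℓ ≠ ⟨0, Nat.zero_lt_of_lt hk⟩ → ℓ ≠ ⟨k-1, by omega⟩ → p ℓ = 0 := by
  set i0 : Fin k := ⟨0, Nat.zero_lt_of_lt hk⟩
  set j : Fin k := ⟨k-1, by omega⟩
  have hji : j ≠ i0 := by simp only [j, i0, Ne, Fin.mk.injEq]; omega
  set p : EuclideanSpace ℝ (Fin k) := WithLp.toLp 2 (fun ℓ => if ℓ = i0 then Real.sqrt c₁ else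
    if ℓ = j then Real.sqrt c₂ else 0) with hp
  have hpi0 : p i0 ^ 2 = c₁ := by simp [hp, Real.sq_sqrt h1]
  have hpj : p j ^ 2 = c₂ := by simp [hp, hji, Real.sq_sqrt h2]
  have hpo : ∀ ℓ, ℓ ≠ i0 → ℓ ≠ j → p ℓ = 0 := by intro ℓ hℓ1 hℓ2; simp [hp, hℓ1, hℓ2]
  refine ⟨p, ?_, hpi0, hpj, hpo⟩
  rw [EuclideanSpace.norm_eq]
  have key : ∀ ℓ : Fin k, ‖p ℓ‖ ^ 2 =
      (if ℓ = i0 then c₁ else 0) + (if ℓ = j then c₂ else 0) := by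
    intro ℓ
    rw [Real.norm_eq_abs, sq_abs]
    by_cases h : ℓ = i0
    · subst h; rw [if_pos rfl, if_neg (fun hh => hji hh.symm), hpi0]; ring
    · by_cases h' : ℓ = j
      · subst h'; rw [if_neg h, if_pos rfl, hpj]; ring
      · rw [if_neg h, if_neg h', hpo ℓ h h']; ring
  rw [Finset.sum_congr rfl (fun ℓ _ => key ℓ), Finset.sum_add_distrib]
  simp [Finset.sum_ite_eq', hc]

private lemma sum_eval_aux {k : ℕ} (hk : 2 ≤ k) (c₁ c₂ : ℝ) (p : EuclideanSpace ℝ (Fin k))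
    (f : Fin k → ℝ)
    (hpi0 : p ⟨0, Nat.zero_lt_of_lt hk⟩ ^ 2 = c₁) (hpj : p ⟨k-1, by omega⟩ ^ 2 = c₂)
    (hpo : ∀ ℓ, ℓ ≠ ⟨0, Nat.zero_lt_of_lt hk⟩ → ℓ ≠ (⟨k-1, by omega⟩ : Fin k) → p ℓ = 0) :
    ∑ ℓ, f ℓ * p ℓ ^ 2 = f ⟨0, Nat.zero_lt_of_lt hk⟩ * c₁ + f ⟨k-1, by omega⟩ * c₂ := by
  set i0 : Fin k := ⟨0, Nat.zero_lt_of_lt hk⟩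
  set j : Fin k := ⟨k-1, by omega⟩
  have hji : j ≠ i0 := by simp only [j, i0, Ne, Fin.mk.injEq]; omega
  have key : ∀ ℓ : Fin k, f ℓ * p ℓ ^ 2 =
      (if ℓ = i0 then f i0 * c₁ else 0) + (if ℓ = j then f j * c₂ else 0) := by
    intro ℓ
    by_cases h : ℓ = i0
    · subst h; rw [if_pos rfl, if_neg (fun hh => hji hh.symm), hpi0]; ring
    · by_cases h' : ℓ = j
      · subst h'; rw [if_neg h, if_pos rfl, hpj]; ring
      · rw [if_neg h, if_neg h', hpo ℓ h h']; ring
  rw [Finset.sum_congr rfl (fun ℓ _ => key ℓ), Finset.sum_add_distrib]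
  simp [Finset.sum_ite_eq']

private lemma sphere_sum_sq {k : ℕ} (x : EuclideanSpace ℝ (Fin k))
    (h : x ∈ sphere (0 : EuclideanSpace ℝ (Fin k)) 1) : ∑ i, x i ^ 2 = 1 := by
  rw [mem_sphere_zero_iff_norm, EuclideanSpace.norm_eq] at h
  have := Real.sqrt_eq_one.mp h
  simpa [Real.norm_eq_abs, sq_abs] using this

end Aux
theorem stmt15 {k : ℕ} (hk : 2 ≤ k) {Ω : Type*} [MeasurableSpace Ω] (P : Measure Ω)
    [IsProbabilityMeasure P] (U : Ω → EuclideanSpace ℝ (Fin k)) (hUmeas : Measurable U)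
    (hlaw : P.map U = uniformSphere k) (lam : Fin k → ℝ)
    (hpos : ∀ i, 0 < lam i) (hmono : ∀ i j : Fin k, i ≤ j → lam j ≤ lam i) :
    P {ω | (1 / (k : ℝ)) * ∑ ℓ, (lam ℓ)⁻¹ * (U ω ℓ) ^ 2 ≤
        (lam ⟨0, by omega⟩)⁻¹ * (U ω ⟨0, by omega⟩) ^ 2} ≤
      P {ω | 1 / (k : ℝ) ≤ (U ω ⟨0, by omega⟩) ^ 2} ∧
    (P {ω | (1 / (k : ℝ)) * ∑ ℓ, (lam ℓ)⁻¹ * (U ω ℓ) ^ 2 ≤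
        (lam ⟨0, by omega⟩)⁻¹ * (U ω ⟨0, by omega⟩) ^ 2} =
      P {ω | 1 / (k : ℝ) ≤ (U ω ⟨0, by omega⟩) ^ 2} ↔
      ∀ i j : Fin k, lam i = lam j) := by
  classical
  have hk0 : 0 < k := by omega
  have hkR : (0:ℝ) < k := by exact_mod_cast hk0
  set i0 : Fin k := ⟨0, by omega⟩ with hi0def
  set S : Set (EuclideanSpace ℝ (Fin k)) := Metric.sphere (0 : EuclideanSpace ℝ (Fin k)) 1
    with hSdef
  set μ := uniformSphere k with hμdef
  have hμprob : IsProbabilityMeasure μ := by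
    have h := Measure.isProbabilityMeasure_map (μ := P) hUmeas.aemeasurable
    rwa [hlaw] at h
  have hSmeas : MeasurableSet S := Metric.isClosed_sphere.measurableSet
  have hcoord : ∀ ℓ : Fin k, Measurable fun x : EuclideanSpace ℝ (Fin k) => x ℓ := fun ℓ =>
    (EuclideanSpace.proj ℓ).continuous.measurable
  set A : Set (EuclideanSpace ℝ (Fin k)) :=
    {x : EuclideanSpace ℝ (Fin k) |
      (1 / (k : ℝ)) * ∑ ℓ, (lam ℓ)⁻¹ * (x ℓ) ^ 2 ≤ (lam i0)⁻¹ * (x i0) ^ 2} with hAdef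
  set B : Set (EuclideanSpace ℝ (Fin k)) :=
    {x : EuclideanSpace ℝ (Fin k) | 1 / (k : ℝ) ≤ (x i0) ^ 2} with hBdef
  have hsummeas : Measurable fun x : EuclideanSpace ℝ (Fin k) =>
      ∑ ℓ, (lam ℓ)⁻¹ * (x ℓ) ^ 2 :=
    Finset.measurable_sum _ (fun ℓ _ => ((hcoord ℓ).pow_const 2).const_mul _)
  have hmeasA : MeasurableSet A :=
    measurableSet_le (hsummeas.const_mul _) (((hcoord i0).pow_const 2).const_mul _)
  have hmeasB : MeasurableSet B :=
    measurableSet_le measurable_const ((hcoord i0).pow_const 2)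
  have hPmap : ∀ (t : Set (EuclideanSpace ℝ (Fin k))), MeasurableSet t → P (U ⁻¹' t) = μ t :=
    fun t ht => by rw [← Measure.map_apply hUmeas ht, hlaw]
  have hPA : P {ω | (1 / (k : ℝ)) * ∑ ℓ, (lam ℓ)⁻¹ * (U ω ℓ) ^ 2 ≤
      (lam i0)⁻¹ * (U ω i0) ^ 2} = μ A := hPmap A hmeasA
  have hPB : P {ω | 1 / (k : ℝ) ≤ (U ω i0) ^ 2} = μ B := hPmap B hmeasB
  have hScompl : μ Sᶜ = 0 := uniformSphere_compl_sphere k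
  have hAS : μ A = μ (A ∩ S) := (measure_inter_conull hScompl).symm
  have hBS : μ B = μ (B ∩ S) := (measure_inter_conull hScompl).symm
  have ha : (0:ℝ) < (lam i0)⁻¹ := inv_pos.2 (hpos i0)
  have hi0le : ∀ ℓ : Fin k, i0 ≤ ℓ := fun ℓ => by
    simp only [hi0def, Fin.le_def]; omega
  have hlam_max : ∀ ℓ : Fin k, (lam i0)⁻¹ ≤ (lam ℓ)⁻¹ := fun ℓ =>
    inv_anti₀ (hpos ℓ) (hmono i0 ℓ (hi0le ℓ))
  have hsum_ge : ∀ x ∈ S, (lam i0)⁻¹ ≤ ∑ ℓ, (lam ℓ)⁻¹ * (x ℓ) ^ 2 := by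
    intro x hx
    calc (lam i0)⁻¹ = ∑ ℓ, (lam i0)⁻¹ * (x ℓ) ^ 2 := by
          rw [← Finset.mul_sum, sphere_sum_sq x hx, mul_one]
      _ ≤ ∑ ℓ, (lam ℓ)⁻¹ * (x ℓ) ^ 2 :=
          Finset.sum_le_sum fun ℓ _ => mul_le_mul_of_nonneg_right (hlam_max ℓ) (sq_nonneg _)
  have hABsub : A ∩ S ⊆ B ∩ S := by
    rintro x ⟨hxA, hxS⟩
    refine ⟨?_, hxS⟩
    have h1 := hsum_ge x hxS
    simp only [hAdef, Set.mem_setOf_eq] at hxA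
    simp only [hBdef, Set.mem_setOf_eq]
    have h2 : (1 / (k:ℝ)) * (lam i0)⁻¹ ≤ (lam i0)⁻¹ * (x i0) ^ 2 := by
      refine le_trans ?_ hxA
      exact mul_le_mul_of_nonneg_left h1 (by positivity)
    nlinarith [one_div_pos.2 hkR]
  constructor
  · calc P {ω | (1 / (k : ℝ)) * ∑ ℓ, (lam ℓ)⁻¹ * (U ω ℓ) ^ 2 ≤
          (lam i0)⁻¹ * (U ω i0) ^ 2} = μ A := hPA
      _ = μ (A ∩ S) := hAS
      _ ≤ μ (B ∩ S) := measure_mono hABsub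
      _ = μ B := hBS.symm
      _ = P {ω | 1 / (k : ℝ) ≤ (U ω i0) ^ 2} := hPB.symm
  constructor
  · -- equality implies all lam equal
    intro heq
    by_contra hne
    push_neg at hne
    obtain ⟨i', j', hij'⟩ := hne
    set j : Fin k := ⟨k-1, by omega⟩ with hjdef
    have hlej : ∀ ℓ : Fin k, ℓ ≤ j := fun ℓ => by
      simp only [hjdef, Fin.le_def]; omega
    have hlt : lam j < lam i0 := by
      rcases lt_or_eq_of_le (hmono i0 j (hi0le j)) with h | h
      · exact h
      · exfalso
        apply hij'
        have hall : ∀ i : Fin k, lam i = lam i0 := fun i =>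
          le_antisymm (hmono i0 i (hi0le i)) (h ▸ hmono i j (hlej i))
        rw [hall i', hall j']
    have hb : (0:ℝ) < (lam j)⁻¹ := inv_pos.2 (hpos j)
    have hab : (lam i0)⁻¹ < (lam j)⁻¹ := (inv_lt_inv₀ (hpos i0) (hpos j)).mpr hlt
    have hu1 : 1 / (k:ℝ) < 1 := by
      rw [div_lt_one hkR]; exact_mod_cast hk.trans_lt' one_lt_two
    obtain ⟨t, ht0, ht1, htlt⟩ :=
      algebra_aux (1/(k:ℝ)) ((lam i0)⁻¹) ((lam j)⁻¹) (one_div_pos.2 hkR) hu1 ha hab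
    obtain ⟨p, hpnorm, hpi0, hpj, hpo⟩ :=
      exists_point_aux hk (1/(k:ℝ) + t) (1 - 1/(k:ℝ) - t) (by positivity) (by linarith)
        (by ring)
    set G : Set (EuclideanSpace ℝ (Fin k)) :=
      {x : EuclideanSpace ℝ (Fin k) | 1 / (k : ℝ) < (x i0) ^ 2} ∩
      {x : EuclideanSpace ℝ (Fin k) |
        (lam i0)⁻¹ * (x i0) ^ 2 < (1 / (k : ℝ)) * ∑ ℓ, (lam ℓ)⁻¹ * (x ℓ) ^ 2} with hGdef
    have hGopen : IsOpen G := by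
      apply IsOpen.inter
      · exact isOpen_lt continuous_const (((EuclideanSpace.proj i0).continuous).pow 2)
      · apply isOpen_lt
        · exact continuous_const.mul (((EuclideanSpace.proj i0).continuous).pow 2)
        · exact continuous_const.mul (continuous_finset_sum _
            (fun ℓ _ => continuous_const.mul (((EuclideanSpace.proj ℓ).continuous).pow 2)))
    have hsumeval : ∑ ℓ, (lam ℓ)⁻¹ * (p ℓ) ^ 2 =
        (lam i0)⁻¹ * (1/(k:ℝ) + t) + (lam j)⁻¹ * (1 - 1/(k:ℝ) - t) :=
      sum_eval_aux hk _ _ p (fun ℓ => (lam ℓ)⁻¹) hpi0 hpj hpo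
    have hpG : p ∈ G := by
      refine ⟨?_, ?_⟩ <;> simp only [Set.mem_setOf_eq]
      · rw [show p i0 ^ 2 = 1/(k:ℝ) + t from hpi0]; linarith
      · rw [show p i0 ^ 2 = 1/(k:ℝ) + t from hpi0, hsumeval]
        exact htlt
    have hpS : p ∈ S := by
      rw [hSdef, mem_sphere_zero_iff_norm]; exact hpnorm
    have hGS : 0 < μ (G ∩ S) := uniformSphere_pos hk0 hGopen ⟨p, hpG, hpS⟩
    have hGsub : G ∩ S ⊆ (B ∩ S) \ (A ∩ S) := by
      rintro x ⟨⟨hx1, hx2⟩, hxS⟩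
      refine ⟨⟨?_, hxS⟩, ?_⟩
      · simp only [hBdef, Set.mem_setOf_eq]
        exact le_of_lt hx1
      rintro ⟨hxA, -⟩
      simp only [hAdef, Set.mem_setOf_eq] at hxA
      exact absurd hxA (not_le.2 hx2)
    have heq' : μ (A ∩ S) = μ (B ∩ S) := by
      rw [← hAS, ← hBS]
      exact (hPA.symm.trans heq).trans hPB
    have hdiff : μ ((B ∩ S) \ (A ∩ S)) = 0 := by
      rw [measure_diff hABsub (hmeasA.inter hSmeas).nullMeasurableSet
        (measure_ne_top μ _), heq', tsub_self]
    have hle := (measure_mono hGsub).trans_eq hdiff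
    exact hGS.ne' (le_antisymm hle zero_le)
  · -- all lam equal implies equality
    intro hall
    have hAB : A ∩ S = B ∩ S := by
      ext x
      simp only [hAdef, hBdef, Set.mem_inter_iff, Set.mem_setOf_eq]
      constructor
      · rintro ⟨h1, h2⟩
        exact ⟨(hABsub ⟨h1, h2⟩).1, h2⟩
      · rintro ⟨h1, h2⟩
        refine ⟨?_, h2⟩
        have hsum : ∑ ℓ, (lam ℓ)⁻¹ * (x ℓ) ^ 2 = (lam i0)⁻¹ := by
          calc ∑ ℓ, (lam ℓ)⁻¹ * (x ℓ) ^ 2 = ∑ ℓ, (lam i0)⁻¹ * (x ℓ) ^ 2 :=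
                Finset.sum_congr rfl (fun ℓ _ => by rw [hall ℓ i0])
            _ = (lam i0)⁻¹ := by rw [← Finset.mul_sum, sphere_sum_sq x h2, mul_one]
        rw [hsum]
        calc (1/(k:ℝ)) * (lam i0)⁻¹ ≤ (x i0)^2 * (lam i0)⁻¹ :=
              mul_le_mul_of_nonneg_right h1 ha.le
          _ = (lam i0)⁻¹ * (x i0)^2 := mul_comm _ _
    rw [hPA, hPB, hAS, hBS, hAB]
end
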